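/- Let A be a symmetric positive definite n×n matrix and σ in the interior of π_T(B_op(A)). Then the set {X ∈ ℝ^{n×n} : XᵀX = A, π_T(X) = σ} has exactly 2^n elements, and no two of these matrices agree on all their diagonal entries. -/

import Mathlib

open Matrix

/-- The projection of a matrix onto its strictly upper triangular entries. -/
def sutProj {n : ℕ} (X : Matrix (Fin n) (Fin n) ℝ) :
    {q : Fin n × Fin n // q.1 < q.2} → ℝ :=
  fun q => X q.1.1 q.1.2

/-- The generalized operator norm ball `B_op(A) = {X : Xᵀ X ⪯ A}`. -/
def genOpNormBall {n : ℕ} (A : Matrix (Fin n) (Fin n) ℝ) :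
    Set (Matrix (Fin n) (Fin n) ℝ) :=
  {X | (A - Xᵀ * X).PosSemidef}


lemma posDef_submatrix_succ {n : ℕ} {A : Matrix (Fin (n+1)) (Fin (n+1)) ℝ} (hA : A.PosDef) :
    (A.submatrix Fin.succ Fin.succ).PosDef := by
  refine Matrix.PosDef.of_dotProduct_mulVec_pos ?_ ?_
  · ext i j
    have := congrFun (congrFun hA.1 j.succ) i.succ
    simpa [conjTranspose_apply] using this.symm
  · intro z hz
    have hz' : (Fin.cons 0 z : Fin (n+1) → ℝ) ≠ 0 := by
      intro h
      apply hz
      funext k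
      have := congrFun h k.succ
      simpa using this
    have hpos := hA.dotProduct_mulVec_pos hz'
    have : star (Fin.cons 0 z : Fin (n+1) → ℝ) ⬝ᵥ (A *ᵥ (Fin.cons 0 z))
        = star z ⬝ᵥ ((A.submatrix Fin.succ Fin.succ) *ᵥ z) := by
      simp [dotProduct, mulVec, Fin.sum_univ_succ]
    rwa [this] at hpos

lemma two_solutions (n : ℕ) (A : Matrix (Fin (n+1)) (Fin (n+1)) ℝ) (hA : A.PosDef)
    (x : Fin n → (Fin (n+1) → ℝ))
    (hGram : ∀ k l, x k ⬝ᵥ x l = A k.succ l.succ)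
    (he0 : ∀ u : Fin (n+1) → ℝ, (∀ k, u ⬝ᵥ x k = 0) → u 0 = 0 → u = 0) :
    ∃ v₁ v₂ : Fin (n+1) → ℝ, v₁ ≠ v₂ ∧ v₁ 0 ≠ v₂ 0 ∧
      {v : Fin (n+1) → ℝ | v ⬝ᵥ v = A 0 0 ∧ ∀ k, v ⬝ᵥ x k = A 0 k.succ} = {v₁, v₂} := by
  have hs : ∀ i j, A i j = A j i := by
    intro i j
    have := congrFun (congrFun hA.1 j) i
    simpa [conjTranspose_apply] using this
  set G : Matrix (Fin n) (Fin n) ℝ := A.submatrix Fin.succ Fin.succ with hGdef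
  have hG : G.PosDef := posDef_submatrix_succ hA
  have hGdet : IsUnit G.det := (isUnit_iff_ne_zero.mpr hG.det_pos.ne')
  set c : Fin n → ℝ := fun k => A 0 k.succ with hcdef
  set α : Fin n → ℝ := G⁻¹ *ᵥ c with hαdef
  have hGα : G *ᵥ α = c := by
    rw [hαdef, mulVec_mulVec, Matrix.mul_nonsing_inv _ hGdet, one_mulVec]
  set v₀ : Fin (n+1) → ℝ := fun i => ∑ k, α k * x k i with hv₀def
  have hv₀dot : ∀ w, v₀ ⬝ᵥ w = ∑ k, α k * (x k ⬝ᵥ w) := by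
    intro w
    simp only [dotProduct, hv₀def, Finset.sum_mul, Finset.mul_sum]
    rw [Finset.sum_comm]
    simp [mul_assoc]
  have hv₀x : ∀ l, v₀ ⬝ᵥ x l = c l := by
    intro l
    rw [hv₀dot]
    have : ∀ k, α k * (x k ⬝ᵥ x l) = G l k * α k := by
      intro k
      rw [hGram, mul_comm]
      congr 1
      exact hs _ _
    rw [Finset.sum_congr rfl fun k _ => this k]
    exact congrFun hGα l
  have hv₀v₀ : v₀ ⬝ᵥ v₀ = ∑ k, α k * c k := by
    rw [hv₀dot]
    exact Finset.sum_congr rfl fun k _ => by rw [dotProduct_comm, hv₀x]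
  -- positivity of the discriminant
  set δ : ℝ := A 0 0 - v₀ ⬝ᵥ v₀ with hδdef
  have hδ : 0 < δ := by
    set z : Fin (n+1) → ℝ := Fin.cons 1 (fun k => -α k) with hzdef
    have hzne : z ≠ 0 := by
      intro h
      have := congrFun h 0
      simp [hzdef] at this
    have hpos := hA.dotProduct_mulVec_pos hzne
    have hcalc : star z ⬝ᵥ (A *ᵥ z) = δ := by
      have hAz : ∀ i, (A *ᵥ z) i = A i 0 - ∑ l, A i l.succ * α l := by
        intro i
        simp [mulVec, dotProduct, Fin.sum_univ_succ, hzdef]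
        ring
      have h0 : (A *ᵥ z) 0 = A 0 0 - ∑ k, α k * c k := by
        rw [hAz]
        simp [hcdef, mul_comm]
      have hksucc : ∀ k, (A *ᵥ z) k.succ = A k.succ 0 - c k := by
        intro k
        rw [hAz]
        congr 1
        calc ∑ l, A k.succ l.succ * α l = (G *ᵥ α) k := by simp [mulVec, dotProduct, hGdef]
        _ = c k := congrFun hGα k
      have : star z ⬝ᵥ (A *ᵥ z) = (A *ᵥ z) 0 - ∑ k, α k * (A *ᵥ z) k.succ := by
        simp [dotProduct, Fin.sum_univ_succ, hzdef]
        ring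
      rw [this, h0]
      have : ∑ k, α k * (A *ᵥ z) k.succ = ∑ k, α k * c k - ∑ k, α k * c k := by
        rw [← Finset.sum_sub_distrib]
        apply Finset.sum_congr rfl
        intro k _
        rw [hksucc]
        have : A k.succ 0 = c k := hs _ _
        rw [this]
        ring
      rw [this, hδdef, hv₀v₀]
      ring
    rw [← hcalc]
    exact hpos
  -- a kernel direction
  set Mx : Matrix (Fin n) (Fin (n+1)) ℝ := Matrix.of (fun k i => x k i) with hMxdef
  set L := Mx.mulVecLin with hLdef
  have hrank : Module.finrank ℝ (LinearMap.range L) + Module.finrank ℝ (LinearMap.ker L) = n + 1 := by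
    have := L.finrank_range_add_finrank_ker
    simpa [Module.finrank_fin_fun] using this
  have hrle : Module.finrank ℝ (LinearMap.range L) ≤ n := by
    have := Submodule.finrank_le (LinearMap.range L)
    simpa [Module.finrank_fin_fun] using this
  have hkerne : LinearMap.ker L ≠ ⊥ := by
    intro h
    rw [h, finrank_bot] at hrank
    omega
  obtain ⟨e, heker, hene⟩ := (Submodule.ne_bot_iff _).mp hkerne
  have hedot : ∀ k, e ⬝ᵥ x k = 0 := by
    intro k
    have := congrFun (LinearMap.mem_ker.mp heker) k
    simpa [hLdef, hMxdef, mulVecLin_apply, mulVec, dotProduct, mul_comm] using this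
  have he00 : e 0 ≠ 0 := fun h => hene (he0 e hedot h)
  have hee : 0 < e ⬝ᵥ e := by
    have hle : (0:ℝ) ≤ e ⬝ᵥ e := Finset.sum_nonneg fun i _ => mul_self_nonneg (e i)
    rcases lt_or_eq_of_le hle with h | h
    · exact h
    · exact absurd (dotProduct_self_eq_zero.mp h.symm) hene
  set τ : ℝ := Real.sqrt (δ / (e ⬝ᵥ e)) with hτdef
  have hτpos : 0 < τ := Real.sqrt_pos.mpr (div_pos hδ hee)
  have hτsq : τ ^ 2 * (e ⬝ᵥ e) = δ := by
    rw [hτdef, Real.sq_sqrt (le_of_lt (div_pos hδ hee))]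
    field_simp
  have he0v₀ : v₀ ⬝ᵥ e = 0 := by
    rw [hv₀dot]
    apply Finset.sum_eq_zero
    intro k _
    rw [dotProduct_comm, hedot, mul_zero]
  have hexp : ∀ t : ℝ, (v₀ + t • e) ⬝ᵥ (v₀ + t • e) = v₀ ⬝ᵥ v₀ + t ^ 2 * (e ⬝ᵥ e) := by
    intro t
    rw [add_dotProduct, dotProduct_add, dotProduct_add, smul_dotProduct, smul_dotProduct,
      dotProduct_smul, dotProduct_smul, he0v₀, dotProduct_comm e v₀, he0v₀]
    simp [smul_eq_mul]
    ring
  have hexpx : ∀ (t : ℝ) (k : Fin n), (v₀ + t • e) ⬝ᵥ x k = A 0 k.succ := by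
    intro t k
    rw [add_dotProduct, smul_dotProduct, hedot, hv₀x, smul_eq_mul, mul_zero, add_zero]
  have hne0 : (v₀ + τ • e) 0 ≠ (v₀ + (-τ) • e) 0 := by
    simp only [Pi.add_apply, Pi.smul_apply, smul_eq_mul]
    intro h
    have hz : τ * e 0 = 0 := by linarith
    rcases mul_eq_zero.mp hz with h' | h'
    exacts [hτpos.ne' h', he00 h']
  have hmem : ∀ t : ℝ, t ^ 2 = τ ^ 2 →
      (v₀ + t • e) ⬝ᵥ (v₀ + t • e) = A 0 0 := by
    intro t ht
    rw [hexp, ht, hτsq, hδdef]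
    ring
  refine ⟨v₀ + τ • e, v₀ + (-τ) • e, fun h => hne0 (congrFun h 0), hne0, ?_⟩
  ext v
  simp only [Set.mem_setOf_eq, Set.mem_insert_iff, Set.mem_singleton_iff]
  constructor
  · rintro ⟨hv1, hv2⟩
    have hu : ∀ k, (v - v₀) ⬝ᵥ x k = 0 := by
      intro k
      rw [sub_dotProduct, hv2, hv₀x]
      exact sub_self _
    set t : ℝ := (v - v₀) 0 / e 0 with htdef
    have hueq : v = v₀ + t • e := by
      have hz := he0 (v - v₀ - t • e) ?_ ?_
      · have : v - v₀ = t • e := by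
          rwa [sub_eq_zero] at hz
        rw [← this]
        abel
      · intro k
        rw [sub_dotProduct, hu, smul_dotProduct, hedot, smul_eq_mul, mul_zero, sub_zero]
      · simp only [Pi.sub_apply, Pi.smul_apply, smul_eq_mul, htdef]
        field_simp
        ring
    have ht2 : t ^ 2 = τ ^ 2 := by
      have h1 : v₀ ⬝ᵥ v₀ + t ^ 2 * (e ⬝ᵥ e) = A 0 0 := by
        rw [← hexp, ← hueq]
        exact hv1
      have h2 : t ^ 2 * (e ⬝ᵥ e) = τ ^ 2 * (e ⬝ᵥ e) := by
        rw [hτsq, hδdef]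
        linarith
      exact mul_right_cancel₀ hee.ne' h2
    rcases sq_eq_sq_iff_eq_or_eq_neg.mp ht2 with h | h
    · left
      rw [hueq, h]
    · right
      rw [hueq, h]
  · rintro (h | h) <;> subst h
    · exact ⟨hmem τ rfl, hexpx τ⟩
    · exact ⟨hmem (-τ) (neg_sq τ), hexpx (-τ)⟩


lemma key (n : ℕ) (A : Matrix (Fin n) (Fin n) ℝ) (hA : A.PosDef)
    (σ : {q : Fin n × Fin n // q.1 < q.2} → ℝ)
    (hfeas : ∃ X₀ : Matrix (Fin n) (Fin n) ℝ, sutProj X₀ = σ ∧ (A - X₀ᵀ * X₀).PosDef) :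
    ({X : Matrix (Fin n) (Fin n) ℝ | Xᵀ * X = A ∧ sutProj X = σ}.ncard = 2 ^ n) ∧
    Set.InjOn (fun X : Matrix (Fin n) (Fin n) ℝ => Matrix.diag X)
      {X | Xᵀ * X = A ∧ sutProj X = σ} := by
  induction n with
  | zero =>
    have huniq : ∀ X Y : Matrix (Fin 0) (Fin 0) ℝ, X = Y := by
      intro X Y; ext i j; exact i.elim0
    constructor
    · have hset : {X : Matrix (Fin 0) (Fin 0) ℝ | Xᵀ * X = A ∧ sutProj X = σ} = Set.univ := by
        ext X
        simp only [Set.mem_setOf_eq, Set.mem_univ, iff_true]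
        exact ⟨huniq _ _, funext fun q => q.1.1.elim0⟩
      rw [hset, Set.ncard_univ]
      haveI : Unique (Matrix (Fin 0) (Fin 0) ℝ) := ⟨⟨0⟩, fun X => huniq X 0⟩
      simp [Nat.card_unique]
    · intro X _ Y _ _
      exact huniq X Y
  | succ n ih =>
    obtain ⟨X₀, hX₀σ, hX₀⟩ := hfeas
    set s : Fin n → ℝ := fun k => σ ⟨(0, k.succ), Fin.succ_pos k⟩ with hsdef
    set σ' : {q : Fin n × Fin n // q.1 < q.2} → ℝ :=
      fun q => σ ⟨(q.1.1.succ, q.1.2.succ), Fin.succ_lt_succ_iff.mpr q.2⟩ with hσ'def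
    set M : Matrix (Fin n) (Fin n) ℝ := Matrix.of (fun k l => A k.succ l.succ - s k * s l)
      with hMdef
    have hX₀entry : ∀ q : {q : Fin (n+1) × Fin (n+1) // q.1 < q.2}, X₀ q.1.1 q.1.2 = σ q :=
      fun q => congrFun hX₀σ q
    have hX₀s : ∀ k : Fin n, X₀ 0 k.succ = s k := fun k => hX₀entry ⟨(0, k.succ), Fin.succ_pos k⟩
    set X₀' := X₀.submatrix Fin.succ Fin.succ with hX₀'def
    have hMdec : M = (A - X₀ᵀ * X₀).submatrix Fin.succ Fin.succ + X₀'ᵀ * X₀' := by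
      ext k l
      simp only [hMdef, Matrix.of_apply, submatrix_apply, Matrix.sub_apply, Matrix.add_apply,
        mul_apply, transpose_apply, Fin.sum_univ_succ, hX₀s, hX₀'def]
      ring
    have hMT : (X₀'ᵀ * X₀').PosSemidef := by
      have h1 := posSemidef_conjTranspose_mul_self X₀'
      have h2 : X₀'ᴴ = X₀'ᵀ := by ext i j; simp [conjTranspose_apply]
      rwa [h2] at h1
    have hM : M.PosDef := by
      rw [hMdec]
      exact (posDef_submatrix_succ hX₀).add_posSemidef hMT
    have hsub0 : (M - X₀'ᵀ * X₀').PosDef := by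
      rw [hMdec, add_sub_cancel_right]
      exact posDef_submatrix_succ hX₀
    have hσ'feas : sutProj X₀' = σ' := by
      funext q
      exact hX₀entry ⟨(q.1.1.succ, q.1.2.succ), Fin.succ_lt_succ_iff.mpr q.2⟩
    obtain ⟨hcard', hinj'⟩ := ih M hM σ' ⟨X₀', hσ'feas, hsub0⟩
    set F : Set (Matrix (Fin (n+1)) (Fin (n+1)) ℝ) := {X | Xᵀ * X = A ∧ sutProj X = σ}
      with hFdef
    set F' : Set (Matrix (Fin n) (Fin n) ℝ) := {X | Xᵀ * X = M ∧ sutProj X = σ'} with hF'def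
    have hs' : ∀ i j, A i j = A j i := fun i j => by
      have := congrFun (congrFun hA.1 j) i
      simpa [conjTranspose_apply] using this
    set xcol : Matrix (Fin n) (Fin n) ℝ → Fin n → (Fin (n+1) → ℝ) :=
      fun y k => Fin.cons (s k) (fun i' => y i' k) with hxcoldef
    set glue : (Fin (n+1) → ℝ) → Matrix (Fin n) (Fin n) ℝ → Matrix (Fin (n+1)) (Fin (n+1)) ℝ :=
      fun v y => Matrix.of (fun i j => (Fin.cons (v i) (fun j' => xcol y j' i) : Fin (n+1) → ℝ) j) with hgluedef
    have hglue0 : ∀ v y i, glue v y i 0 = v i := fun v y i => by simp [hgluedef]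
    have hglues : ∀ v y i j', glue v y i (Fin.succ j') = xcol y j' i := fun v y i j' => by
      simp [hgluedef]
    have hGram : ∀ y : Matrix (Fin n) (Fin n) ℝ, y ∈ F' →
        ∀ k l, xcol y k ⬝ᵥ xcol y l = A k.succ l.succ := by
      intro y hy k l
      have hyM : (yᵀ * y) k l = M k l := by rw [hy.1]
      have h2 : ∑ i', y i' k * y i' l = M k l := by
        rw [← hyM]; simp [mul_apply, transpose_apply]
      simp only [dotProduct, Fin.sum_univ_succ, hxcoldef, Fin.cons_zero, Fin.cons_succ]
      rw [h2, hMdef]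
      simp only [Matrix.of_apply]
      ring
    have hdet : ∀ y : Matrix (Fin n) (Fin n) ℝ, y ∈ F' → IsUnit y.det := by
      intro y hy
      have h1 : y.det * y.det = M.det := by
        rw [← hy.1, det_mul, det_transpose]
      have h2 : M.det ≠ 0 := hM.det_pos.ne'
      rw [isUnit_iff_ne_zero]
      intro h
      rw [h, mul_zero] at h1
      exact h2 h1.symm
    have he0 : ∀ y ∈ F', ∀ u : Fin (n+1) → ℝ, (∀ k, u ⬝ᵥ xcol y k = 0) → u 0 = 0 → u = 0 := by
      intro y hy u hu hu0
      have hvm : (fun i' : Fin n => u i'.succ) ᵥ* y = 0 := by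
        funext k
        have h3 := hu k
        simp only [dotProduct, Fin.sum_univ_succ, hxcoldef, Fin.cons_zero, Fin.cons_succ,
          hu0, zero_mul, zero_add] at h3
        simpa [vecMul, dotProduct] using h3
      have h4 : (fun i' : Fin n => u i'.succ) = 0 := by
        have h5 := congrArg (fun w => w ᵥ* y⁻¹) hvm
        simpa [vecMul_vecMul, Matrix.mul_nonsing_inv _ (hdet y hy)] using h5
      funext i
      refine Fin.cases hu0 (fun i' => ?_) i
      exact congrFun h4 i'
    have hmain : ∀ y ∈ F', ∃ X1 X2 : Matrix (Fin (n+1)) (Fin (n+1)) ℝ,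
        X1 ≠ X2 ∧ X1 0 0 ≠ X2 0 0 ∧
        {X | X ∈ F ∧ X.submatrix Fin.succ Fin.succ = y} = {X1, X2} := by
      intro y hy
      obtain ⟨v₁, v₂, hv12, hv120, hVset⟩ :=
        two_solutions n A hA (xcol y) (hGram y hy) (he0 y hy)
      have hgsub : ∀ v, (glue v y).submatrix Fin.succ Fin.succ = y := by
        intro v; ext i' j'; simp [hgluedef, hxcoldef]
      have hcolfun : ∀ v (t i : Fin (n+1)),
          glue v y t i = (Fin.cons v (xcol y) : Fin (n+1) → Fin (n+1) → ℝ) i t := by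
        intro v t i
        refine Fin.cases ?_ (fun k => ?_) i <;> simp [hgluedef]
      have hglueF : ∀ v, v ⬝ᵥ v = A 0 0 → (∀ k, v ⬝ᵥ xcol y k = A 0 k.succ) →
          glue v y ∈ F := by
        intro v hv1 hv2
        constructor
        · ext i j
          rw [mul_apply]
          have hc : ∀ t, (glue v y)ᵀ i t * glue v y t j
              = (Fin.cons v (xcol y) : Fin (n+1) → Fin (n+1) → ℝ) i t *
                (Fin.cons v (xcol y) : Fin (n+1) → Fin (n+1) → ℝ) j t := by
            intro t
            rw [transpose_apply, hcolfun, hcolfun]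
          rw [Finset.sum_congr rfl (fun t _ => hc t)]
          refine Fin.cases ?_ (fun k => ?_) i <;> refine Fin.cases ?_ (fun l => ?_) j <;>
            simp only [Fin.cons_zero, Fin.cons_succ]
          · exact hv1
          · exact hv2 l
          · rw [show ∑ t, xcol y k t * v t = v ⬝ᵥ xcol y k from by
              simp [dotProduct, mul_comm], hv2 k]
            exact hs' 0 k.succ
          · exact hGram y hy k l
        · funext q
          obtain ⟨⟨i, j⟩, hij⟩ := q
          show glue v y i j = σ ⟨(i, j), hij⟩
          revert hij
          refine Fin.cases ?_ (fun j' => ?_) j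
          · intro hij
            exact absurd hij (Fin.not_lt_zero i)
          · refine Fin.cases ?_ (fun i' => ?_) i
            · intro hij
              have h1 : glue v y 0 j'.succ = s j' := by simp [hgluedef, hxcoldef]
              rw [h1]
            · intro hij
              have h' : i' < j' := Fin.succ_lt_succ_iff.mp hij
              have h1 : glue v y i'.succ j'.succ = y i' j' := by simp [hgluedef, hxcoldef]
              rw [h1]
              exact congrFun hy.2 ⟨(i', j'), h'⟩
      have hforward : ∀ X, X ∈ F → X.submatrix Fin.succ Fin.succ = y →
          X = glue (fun i => X i 0) y := by
        intro X hX hXy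
        ext i j
        refine Fin.cases ?_ (fun j' => ?_) j
        · simp [hgluedef]
        · refine Fin.cases ?_ (fun i' => ?_) i
          · have h1 := congrFun hX.2 ⟨((0 : Fin (n+1)), j'.succ), Fin.succ_pos j'⟩
            have h2 : glue (fun i => X i 0) y 0 j'.succ = s j' := by
              simp [hgluedef, hxcoldef]
            rw [h2]
            exact h1
          · have h1 := congrFun (congrFun hXy i') j'
            have h2 : glue (fun i => X i 0) y i'.succ j'.succ = y i' j' := by
              simp [hgluedef, hxcoldef]
            rw [h2]
            exact h1
      have hvmem : ∀ X, X ∈ F → X.submatrix Fin.succ Fin.succ = y →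
          ((fun i => X i 0) ⬝ᵥ (fun i => X i 0) = A 0 0 ∧
            ∀ k, (fun i => X i 0) ⬝ᵥ xcol y k = A 0 k.succ) := by
        intro X hX hXy
        constructor
        · have h1 := congrFun (congrFun hX.1 0) 0
          rw [mul_apply] at h1
          simpa [dotProduct, transpose_apply] using h1
        · intro k
          have h1 := congrFun (congrFun hX.1 0) k.succ
          rw [mul_apply] at h1
          have hcol : ∀ t, xcol y k t = X t k.succ := by
            intro t
            refine Fin.cases ?_ (fun t' => ?_) t
            · exact (congrFun hX.2 ⟨((0 : Fin (n+1)), k.succ), Fin.succ_pos k⟩).symm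
            · exact (congrFun (congrFun hXy t') k).symm
          simp only [dotProduct]
          rw [Finset.sum_congr rfl (fun t _ => by rw [hcol t])]
          simpa [transpose_apply] using h1
      refine ⟨glue v₁ y, glue v₂ y, ?_, ?_, ?_⟩
      · intro h
        apply hv12
        funext i
        have := congrFun (congrFun h i) 0
        rwa [hglue0, hglue0] at this
      · rw [show glue v₁ y 0 0 = v₁ 0 from hglue0 v₁ y 0,
          show glue v₂ y 0 0 = v₂ 0 from hglue0 v₂ y 0]
        exact hv120
      · ext X
        simp only [Set.mem_setOf_eq, Set.mem_insert_iff, Set.mem_singleton_iff]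
        constructor
        · rintro ⟨hXF, hXy⟩
          have hXeq := hforward X hXF hXy
          have hvm : (fun i => X i 0) ∈ {v : Fin (n+1) → ℝ |
              v ⬝ᵥ v = A 0 0 ∧ ∀ k, v ⬝ᵥ xcol y k = A 0 k.succ} := hvmem X hXF hXy
          rw [hVset] at hvm
          rcases hvm with h | h
          · left; rw [hXeq, h]
          · right; rw [hXeq, h]
        · have hm1 : v₁ ∈ {v : Fin (n+1) → ℝ |
              v ⬝ᵥ v = A 0 0 ∧ ∀ k, v ⬝ᵥ xcol y k = A 0 k.succ} := by
            rw [hVset]; left; rfl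
          have hm2 : v₂ ∈ {v : Fin (n+1) → ℝ |
              v ⬝ᵥ v = A 0 0 ∧ ∀ k, v ⬝ᵥ xcol y k = A 0 k.succ} := by
            rw [hVset]; right; rfl
          rintro (h | h) <;> subst h
          · exact ⟨hglueF v₁ hm1.1 hm1.2, hgsub v₁⟩
          · exact ⟨hglueF v₂ hm2.1 hm2.2, hgsub v₂⟩
    have hmapsto : ∀ X, X ∈ F → X.submatrix Fin.succ Fin.succ ∈ F' := by
      intro X hX
      constructor
      · ext k l
        have h1 := congrFun (congrFun hX.1 k.succ) l.succ
        rw [mul_apply] at h1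
        simp only [transpose_apply] at h1
        have h0k : X 0 k.succ = s k := congrFun hX.2 ⟨((0 : Fin (n+1)), k.succ), Fin.succ_pos k⟩
        have h0l : X 0 l.succ = s l := congrFun hX.2 ⟨((0 : Fin (n+1)), l.succ), Fin.succ_pos l⟩
        rw [Fin.sum_univ_succ, h0k, h0l] at h1
        rw [mul_apply]
        simp only [transpose_apply, submatrix_apply, hMdef, Matrix.of_apply]
        linarith
      · funext q
        exact congrFun hX.2 ⟨(q.1.1.succ, q.1.2.succ), Fin.succ_lt_succ_iff.mpr q.2⟩
    have hF'fin : F'.Finite := by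
      by_contra h
      rw [Set.Infinite.ncard h] at hcard'
      exact (pow_ne_zero n (two_ne_zero)) hcard'.symm
    have hFfin : F.Finite := by
      have hsub : F ⊆ ⋃ y ∈ F', {X | X ∈ F ∧ X.submatrix Fin.succ Fin.succ = y} := by
        intro X hX
        exact Set.mem_biUnion (hmapsto X hX) ⟨hX, rfl⟩
      refine Set.Finite.subset (Set.Finite.biUnion hF'fin ?_) hsub
      intro y hy
      obtain ⟨X1, X2, _, _, heq⟩ := hmain y hy
      rw [heq]
      exact (Set.finite_singleton X2).insert X1
    classical
    have hcount : F.ncard = 2 ^ (n+1) := by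
      rw [Set.ncard_eq_toFinset_card F hFfin]
      rw [Finset.card_eq_sum_card_fiberwise
        (f := fun X => X.submatrix Fin.succ Fin.succ) (t := hF'fin.toFinset)
        (fun X hX => by
          simp only [Finset.mem_coe, Set.Finite.mem_toFinset] at *
          exact hmapsto X hX)]
      have hfib : ∀ y ∈ hF'fin.toFinset,
          (hFfin.toFinset.filter (fun X => X.submatrix Fin.succ Fin.succ = y)).card = 2 := by
        intro y hy
        rw [Set.Finite.mem_toFinset] at hy
        obtain ⟨X1, X2, hne, _, heq⟩ := hmain y hy
        have hset : ∀ X, (X ∈ F ∧ X.submatrix Fin.succ Fin.succ = y) ↔ (X = X1 ∨ X = X2) := by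
          intro X
          have := Set.ext_iff.mp heq X
          simpa using this
        have hfe : hFfin.toFinset.filter (fun X => X.submatrix Fin.succ Fin.succ = y)
            = {X1, X2} := by
          ext X
          simp only [Finset.mem_filter, Set.Finite.mem_toFinset, Finset.mem_insert,
            Finset.mem_singleton]
          exact hset X
        rw [hfe, Finset.card_insert_of_notMem (by simpa using hne), Finset.card_singleton]
      rw [Finset.sum_congr rfl hfib, Finset.sum_const, smul_eq_mul]
      have hc : hF'fin.toFinset.card = 2 ^ n := by
        rw [← Set.ncard_eq_toFinset_card _ hF'fin]
        exact hcard'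
      rw [hc, pow_succ]
    refine ⟨hcount, ?_⟩
    intro X hX Y hY hdiag
    have hdiag' : Matrix.diag X = Matrix.diag Y := hdiag
    have hXY' : X.submatrix Fin.succ Fin.succ = Y.submatrix Fin.succ Fin.succ := by
      apply hinj' (hmapsto X hX) (hmapsto Y hY)
      funext k
      exact congrFun hdiag' k.succ
    obtain ⟨X1, X2, hne, h00, heq⟩ := hmain (X.submatrix Fin.succ Fin.succ) (hmapsto X hX)
    have hXm : X ∈ ({X1, X2} : Set _) := by
      rw [← heq]; exact ⟨hX, rfl⟩
    have hYm : Y ∈ ({X1, X2} : Set _) := by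
      rw [← heq]; exact ⟨hY, hXY'.symm⟩
    have h00' : X 0 0 = Y 0 0 := congrFun hdiag' 0
    rcases hXm with h1 | h1 <;> rcases hYm with h2 | h2 <;>
      (try rw [Set.mem_singleton_iff] at h1) <;> (try rw [Set.mem_singleton_iff] at h2) <;>
      subst h1 <;> subst h2
    · rfl
    · exact absurd h00' h00
    · exact absurd h00'.symm h00
    · rfl

/-- For `A` positive definite and `σ` in the interior of `π_T(B_op(A))`, the
set `{X : Xᵀ X = A, π_T(X) = σ}` has exactly `2^n` elements, no two of which
agree on all diagonal entries. -/
theorem card_fiber_sut_eq_two_pow (n : ℕ)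
    (A : Matrix (Fin n) (Fin n) ℝ) (hA : A.PosDef)
    (σ : {q : Fin n × Fin n // q.1 < q.2} → ℝ)
    (hσ : σ ∈ interior (sutProj '' genOpNormBall A)) :
    ({X : Matrix (Fin n) (Fin n) ℝ | Xᵀ * X = A ∧ sutProj X = σ}.ncard = 2 ^ n) ∧
    Set.InjOn (fun X : Matrix (Fin n) (Fin n) ℝ => Matrix.diag X)
      {X | Xᵀ * X = A ∧ sutProj X = σ} := by
  have hcont : Continuous (fun t : ℝ => t • σ) := continuous_id.smul continuous_const
  have h1mem : (1 : ℝ) ∈ (fun t : ℝ => t • σ) ⁻¹' interior (sutProj '' genOpNormBall A) := by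
    simp only [Set.mem_preimage, one_smul]
    exact hσ
  obtain ⟨ε, hε, hball⟩ := Metric.isOpen_iff.mp (isOpen_interior.preimage hcont) 1 h1mem
  set t : ℝ := 1 + ε/2 with htdef
  have ht1 : 1 < t := by rw [htdef]; linarith
  have htmem : t • σ ∈ sutProj '' genOpNormBall A := by
    have hmem : t ∈ Metric.ball (1:ℝ) ε := by
      rw [Metric.mem_ball, Real.dist_eq, htdef]
      rw [show (1 + ε/2 - 1 : ℝ) = ε/2 by ring, abs_of_nonneg (by linarith)]
      linarith
    exact interior_subset (hball hmem)
  obtain ⟨X'', hX''ball, hX''σ⟩ := htmem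
  have ht0 : (0:ℝ) < t := by linarith
  set c : ℝ := t⁻¹ with hcdef
  have hc0 : 0 < c := by positivity
  have hc1 : c < 1 := by
    rw [hcdef]
    exact inv_lt_one_of_one_lt₀ ht1
  have hc2 : c ^ 2 < 1 := by nlinarith
  apply key n A hA σ
  refine ⟨c • X'', ?_, ?_⟩
  · funext q
    have h1 : sutProj X'' q = t * σ q := congrFun hX''σ q
    show c * X'' q.1.1 q.1.2 = σ q
    have h2 : X'' q.1.1 q.1.2 = t * σ q := h1
    rw [h2, hcdef, ← mul_assoc, inv_mul_cancel₀ ht0.ne', one_mul]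
  · have hid : A - (c • X'')ᵀ * (c • X'') = (c^2) • (A - X''ᵀ * X'') + (1 - c^2) • A := by
      ext i j
      simp only [Matrix.sub_apply, Matrix.add_apply, Matrix.smul_apply, mul_apply,
        Matrix.transpose_apply, smul_eq_mul, Finset.mul_sum]
      have hsum : ∑ x, c * X'' x i * (c * X'' x j) = c^2 * ∑ x, X'' x i * X'' x j := by
        rw [Finset.mul_sum]
        exact Finset.sum_congr rfl fun k _ => by ring
      rw [hsum]
      ring
    rw [hid]
    have hPSD : ((c^2) • (A - X''ᵀ * X'')).PosSemidef := by
      refine Matrix.PosSemidef.of_dotProduct_mulVec_nonneg ?_ ?_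
      · ext i j
        have h3 := congrFun (congrFun hX''ball.1 i) j
        simp only [conjTranspose_apply, Matrix.smul_apply, star_trivial, smul_eq_mul] at h3 ⊢
        rw [h3]
      · intro x
        rw [smul_mulVec, dotProduct_smul, smul_eq_mul]
        exact mul_nonneg (by positivity) (hX''ball.dotProduct_mulVec_nonneg x)
    have hPD : ((1 - c^2) • A).PosDef := by
      refine Matrix.PosDef.of_dotProduct_mulVec_pos ?_ ?_
      · ext i j
        have h3 := congrFun (congrFun hA.1 i) j
        simp only [conjTranspose_apply, Matrix.smul_apply, star_trivial, smul_eq_mul] at h3 ⊢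
        rw [h3]
      · intro x hx
        rw [smul_mulVec, dotProduct_smul, smul_eq_mul]
        exact mul_pos (by linarith) (hA.dotProduct_mulVec_pos hx)
    exact Matrix.PosDef.posSemidef_add hPSD hPD
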